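/- (Equality case of Bregman–Minc) Let A be an n×n 0-1 matrix with all row sums r_i ≥ 1. Then perm(A) = Π_{i=1}^n (r_i!)^(1/r_i) if and only if there exist permutation matrices P, Q such that PAQ is a block-diagonal matrix whose diagonal blocks are square all-ones matrices. -/

import Mathlib

open Finset

theorem Equiv.Perm.apply_inv_self {α : Type*} (f : Equiv.Perm α) (x : α) : f (f⁻¹ x) = x :=
  Equiv.apply_symm_apply f x

theorem Equiv.Perm.inv_apply_self {α : Type*} (f : Equiv.Perm α) (x : α) : f⁻¹ (f x) = x :=
  Equiv.symm_apply_apply f x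

namespace BregmanMincAux

open Equiv

variable {n : ℕ} (E : Fin n → Fin n → Prop) [DecidableRel E]

/-- Permutations compatible with `E` outside `F` and equal to the partial
assignment `f` on `F`.  (Permutations send columns to rows.) -/
def Sset (F : Finset (Fin n)) (f : Fin n → Fin n) : Finset (Equiv.Perm (Fin n)) :=
  Finset.univ.filter fun σ => (∀ c ∈ F, σ c = f c) ∧ ∀ c ∉ F, E (σ c) c

/-- Row degree of row `b` among the remaining (non-fixed) columns. -/
def rdeg (F : Finset (Fin n)) (b : Fin n) : ℕ := (Fᶜ.filter fun c => E b c).card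

/-- The Bregman bound, in logarithmic form. -/
noncomputable def Bsum (F : Finset (Fin n)) (f : Fin n → Fin n) : ℝ :=
  ∑ b ∈ (F.image f)ᶜ, (1 / (rdeg E F b : ℝ)) * Real.log (Nat.factorial (rdeg E F b))

/-- Block structure of the remaining minor. -/
def Blockish (F : Finset (Fin n)) (f : Fin n → Fin n) : Prop :=
  ∀ a ∈ (F.image f)ᶜ, ∀ a' ∈ (F.image f)ᶜ, ∀ c ∈ Fᶜ, ∀ c' ∈ Fᶜ,
    E a c → E a' c → E a c' → E a' c'

variable {E}

lemma mem_Sset {F : Finset (Fin n)} {f : Fin n → Fin n} {σ : Equiv.Perm (Fin n)} :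
    σ ∈ Sset E F f ↔ (∀ c ∈ F, σ c = f c) ∧ ∀ c ∉ F, E (σ c) c := by
  simp [Sset]

lemma sigma_notMem_image {F : Finset (Fin n)} {f : Fin n → Fin n} {σ : Equiv.Perm (Fin n)}
    (hσ : σ ∈ Sset E F f) {c : Fin n} (hc : c ∉ F) : σ c ∉ F.image f := by
  rw [mem_Sset] at hσ
  rintro h
  obtain ⟨d, hd, hfd⟩ := Finset.mem_image.1 h
  have : σ d = σ c := by rw [hσ.1 d hd, hfd]
  exact hc (σ.injective this ▸ hd)

lemma inv_notMem {F : Finset (Fin n)} {f : Fin n → Fin n} {σ : Equiv.Perm (Fin n)}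
    (hσ : σ ∈ Sset E F f) {b : Fin n} (hb : b ∉ F.image f) : σ⁻¹ b ∉ F := by
  rw [mem_Sset] at hσ
  intro h
  apply hb
  have : σ (σ⁻¹ b) = f (σ⁻¹ b) := hσ.1 _ h
  rw [Equiv.Perm.apply_inv_self] at this
  exact Finset.mem_image.2 ⟨_, h, this.symm⟩

lemma E_inv {F : Finset (Fin n)} {f : Fin n → Fin n} {σ : Equiv.Perm (Fin n)}
    (hσ : σ ∈ Sset E F f) {b : Fin n} (hb : b ∉ F.image f) : E b (σ⁻¹ b) := by
  have h1 := inv_notMem hσ hb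
  have := (mem_Sset.1 hσ).2 _ h1
  rwa [Equiv.Perm.apply_inv_self] at this

lemma injOn_update {F : Finset (Fin n)} {f : Fin n → Fin n} (hf : Set.InjOn f F)
    {a c : Fin n} (hc : c ∉ F) (ha : a ∉ F.image f) :
    Set.InjOn (Function.update f c a) (insert c F : Finset (Fin n)) := by
  intro x hx y hy hxy
  have hx' : x = c ∨ x ∈ F := by simpa using hx
  have hy' : y = c ∨ y ∈ F := by simpa using hy
  rcases hx' with hx1 | hx1 <;> rcases hy' with hy1 | hy1
  · rw [hx1, hy1]
  · rw [hx1, Function.update_self,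
      Function.update_of_ne (fun h : y = c => hc (h ▸ hy1))] at hxy
    exact absurd (Finset.mem_image.2 ⟨y, hy1, hxy.symm⟩) ha
  · rw [hy1, Function.update_self,
      Function.update_of_ne (fun h : x = c => hc (h ▸ hx1))] at hxy
    exact absurd (Finset.mem_image.2 ⟨x, hx1, hxy⟩) ha
  · rw [Function.update_of_ne (fun h : x = c => hc (h ▸ hx1)),
      Function.update_of_ne (fun h : y = c => hc (h ▸ hy1))] at hxy
    exact hf hx1 hy1 hxy

lemma image_update {F : Finset (Fin n)} {f : Fin n → Fin n} {a c : Fin n} (hc : c ∉ F) :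
    (insert c F).image (Function.update f c a) = insert a (F.image f) := by
  rw [Finset.image_insert, Function.update_self]
  congr 1
  apply Finset.image_congr
  intro x hx
  exact Function.update_of_ne (fun h : x = c => hc (h ▸ hx)) _ _

/-- The fibre of `Sset` over `σ c = a` is the minor `Sset`. -/
lemma filter_Sset {F : Finset (Fin n)} {f : Fin n → Fin n} {a c : Fin n}
    (hc : c ∉ F) (hac : E a c) :
    (Sset E F f).filter (fun σ => σ c = a) = Sset E (insert c F) (Function.update f c a) := by
  ext σ
  simp only [Finset.mem_filter, mem_Sset]
  constructor
  · rintro ⟨⟨h1, h2⟩, h3⟩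
    refine ⟨fun d hd => ?_, fun d hd => h2 d (fun h => hd (Finset.mem_insert_of_mem h))⟩
    rcases Finset.mem_insert.1 hd with rfl | hd
    · rw [h3, Function.update_self]
    · rw [h1 d hd, Function.update_of_ne (fun h : d = c => hc (h ▸ hd))]
  · rintro ⟨h1, h2⟩
    have hσc : σ c = a := by rw [h1 c (Finset.mem_insert_self c F), Function.update_self]
    refine ⟨⟨fun d hd => ?_, fun d hd => ?_⟩, hσc⟩
    · rw [h1 d (Finset.mem_insert_of_mem hd),
        Function.update_of_ne (fun h : d = c => hc (h ▸ hd))]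
    · by_cases hdc : d = c
      · subst hdc; rw [hσc]; exact hac
      · exact h2 d (by simp [hdc, hd])

/-- Column partition of `Sset` according to the row assigned to column `c`. -/
lemma col_partition {F : Finset (Fin n)} {f : Fin n → Fin n} {c : Fin n} (hc : c ∉ F) :
    (Sset E F f).card =
      ∑ a ∈ (F.image f)ᶜ.filter (fun a => E a c),
        (Sset E (insert c F) (Function.update f c a)).card := by
  have H : ∀ σ ∈ Sset E F f, σ c ∈ (F.image f)ᶜ.filter (fun a => E a c) := fun σ hσ =>
    Finset.mem_filter.2 ⟨Finset.mem_compl.2 (sigma_notMem_image hσ hc),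
      (mem_Sset.1 hσ).2 c hc⟩
  rw [Finset.card_eq_sum_card_fiberwise H]
  exact Finset.sum_congr rfl fun a ha => by
    rw [filter_Sset hc (Finset.mem_filter.1 ha).2]

/-- Row partition of `Sset` according to the column assigned to row `a`. -/
lemma row_partition {F : Finset (Fin n)} {f : Fin n → Fin n} {a : Fin n}
    (ha : a ∉ F.image f) :
    (Sset E F f).card =
      ∑ c ∈ Fᶜ.filter (fun c => E a c),
        (Sset E (insert c F) (Function.update f c a)).card := by
  have H : ∀ σ ∈ Sset E F f, σ⁻¹ a ∈ Fᶜ.filter (fun c => E a c) := fun σ hσ =>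
    Finset.mem_filter.2 ⟨Finset.mem_compl.2 (inv_notMem hσ ha), E_inv hσ ha⟩
  rw [Finset.card_eq_sum_card_fiberwise H]
  refine Finset.sum_congr rfl fun c hc => ?_
  have hc' : c ∉ F := Finset.mem_compl.1 (Finset.mem_filter.1 hc).1
  rw [← filter_Sset hc' (Finset.mem_filter.1 hc).2]
  congr 1
  apply Finset.filter_congr
  intro σ _
  constructor
  · intro h; rw [← h, Equiv.Perm.apply_inv_self]
  · intro h; rw [← h, Equiv.Perm.inv_apply_self]

lemma rdeg_insert {F : Finset (Fin n)} {b c : Fin n} (hc : c ∉ F) :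
    rdeg E (insert c F) b = if E b c then rdeg E F b - 1 else rdeg E F b := by
  unfold rdeg
  rw [Finset.compl_insert, Finset.filter_erase]
  by_cases h : E b c
  · simp only [h, if_true]
    rw [Finset.card_erase_of_mem (Finset.mem_filter.2 ⟨Finset.mem_compl.2 hc, h⟩)]
  · simp only [h, if_false]
    rw [Finset.erase_eq_of_notMem (fun hm => h (Finset.mem_filter.1 hm).2)]


lemma Bsum_nonneg (F : Finset (Fin n)) (f : Fin n → Fin n) : 0 ≤ Bsum E F f := by
  apply Finset.sum_nonneg
  intro b _
  apply mul_nonneg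
  · positivity
  · apply Real.log_nonneg
    exact_mod_cast Nat.one_le_iff_ne_zero.2 (Nat.factorial_ne_zero _)

lemma card_compl_image {F : Finset (Fin n)} {f : Fin n → Fin n} (hf : Set.InjOn f F) :
    ((F.image f)ᶜ).card = Fᶜ.card := by
  rw [Finset.card_compl, Finset.card_compl, Finset.card_image_of_injOn hf]

lemma image_Sset {F : Finset (Fin n)} {f : Fin n → Fin n} (hf : Set.InjOn f F)
    {σ : Equiv.Perm (Fin n)} (hσ : σ ∈ Sset E F f) :
    Fᶜ.image σ = (F.image f)ᶜ := by
  apply Finset.eq_of_subset_of_card_le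
  · intro b hb
    obtain ⟨c, hc, rfl⟩ := Finset.mem_image.1 hb
    exact Finset.mem_compl.2 (sigma_notMem_image hσ (Finset.mem_compl.1 hc))
  · rw [card_compl_image hf, Finset.card_image_of_injective _ σ.injective]

/-- Jensen's inequality for `x ↦ x * log x` with uniform weights, and its equality case. -/
lemma jensen_row {ι : Type*} (s : Finset ι) (t : ι → ℝ) (ht : ∀ i ∈ s, 0 ≤ t i)
    (P : ℝ) (hP : P = ∑ i ∈ s, t i) (hs : s.Nonempty) :
    P * Real.log P - P * Real.log s.card ≤ ∑ i ∈ s, t i * Real.log (t i) ∧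
    (P * Real.log P - P * Real.log s.card = ∑ i ∈ s, t i * Real.log (t i) →
      ∀ i ∈ s, t i = P / s.card) := by
  have hcard : (0:ℝ) < s.card := by exact_mod_cast Finset.card_pos.2 hs
  set rr : ℝ := (s.card : ℝ) with hrr
  have hw : ∑ _i ∈ s, rr⁻¹ = 1 := by
    rw [Finset.sum_const, nsmul_eq_mul]
    field_simp
    exact hrr.symm
  have hsum : ∑ i ∈ s, rr⁻¹ • t i = P / rr := by
    simp only [smul_eq_mul]
    rw [← Finset.mul_sum, ← hP, div_eq_inv_mul]
  have hmem : ∀ i ∈ s, t i ∈ Set.Ici (0:ℝ) := fun i hi => ht i hi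
  have hw0 : ∀ i ∈ s, (0:ℝ) ≤ rr⁻¹ := fun _ _ => by positivity
  have hjen := Real.convexOn_mul_log.map_sum_le hw0 hw hmem
  rw [hsum] at hjen
  have key : P * Real.log P - P * Real.log rr ≤ rr * ∑ i ∈ s, rr⁻¹ • (t i * Real.log (t i)) := by
    rcases eq_or_lt_of_le (by rw [hP]; exact Finset.sum_nonneg ht : (0:ℝ) ≤ P) with hP0 | hP0
    · rw [← hP0]
      simp only [zero_mul, sub_zero, zero_sub]
      calc (0:ℝ) ≤ 0 := le_refl 0
        _ ≤ _ := by
          apply mul_nonneg hcard.le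
          apply Finset.sum_nonneg
          intro i hi
          have hti : t i = 0 := by
            have := (Finset.sum_eq_zero_iff_of_nonneg ht).1 (hP0 ▸ hP.symm) i hi
            exact this
          simp [hti]
    · have h2 : rr * ((P/rr) * Real.log (P/rr)) ≤ rr * ∑ i ∈ s, rr⁻¹ • (t i * Real.log (t i)) :=
        mul_le_mul_of_nonneg_left hjen hcard.le
      calc P * Real.log P - P * Real.log rr = rr * ((P/rr) * Real.log (P/rr)) := by
            rw [Real.log_div (ne_of_gt hP0) (ne_of_gt hcard)]
            field_simp
        _ ≤ _ := h2
  have hsimp : rr * ∑ i ∈ s, rr⁻¹ • (t i * Real.log (t i)) = ∑ i ∈ s, t i * Real.log (t i) := by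
    simp only [smul_eq_mul]
    rw [← Finset.mul_sum, ← mul_assoc, mul_inv_cancel₀ (ne_of_gt hcard), one_mul]
  rw [hsimp] at key
  refine ⟨key, fun heq i hi => ?_⟩
  -- equality case
  rcases eq_or_lt_of_le (by rw [hP]; exact Finset.sum_nonneg ht : (0:ℝ) ≤ P) with hP0 | hP0
  · have hti : t i = 0 := (Finset.sum_eq_zero_iff_of_nonneg ht).1 (hP0 ▸ hP.symm) i hi
    rw [hti, ← hP0, zero_div]
  · have heq2 : (fun x => x * Real.log x) (∑ i ∈ s, rr⁻¹ • t i)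
        = ∑ i ∈ s, rr⁻¹ • ((fun x => x * Real.log x) (t i)) := by
      simp only [smul_eq_mul]
      have hsum' : ∑ x ∈ s, rr⁻¹ * t x = P / rr := by
        simpa only [smul_eq_mul] using hsum
      rw [hsum']
      have : ∑ i ∈ s, rr⁻¹ * (t i * Real.log (t i))
          = rr⁻¹ * ∑ i ∈ s, (t i * Real.log (t i)) := by rw [Finset.mul_sum]
      rw [this, ← heq]
      rw [Real.log_div (ne_of_gt hP0) (ne_of_gt hcard)]
      field_simp
    have hall := (Real.strictConvexOn_mul_log.map_sum_eq_iff
      (fun i _ => by positivity) hw hmem).1 heq2 i hi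
    rw [hsum] at hall
    exact hall


lemma exists_sigma {F : Finset (Fin n)} {f : Fin n → Fin n} {a c : Fin n}
    (hc : c ∉ F) (hac : E a c)
    (hne : (Sset E (insert c F) (Function.update f c a)).Nonempty) :
    ∃ σ ∈ Sset E F f, σ c = a := by
  obtain ⟨σ, hσ⟩ := hne
  rw [← filter_Sset hc hac] at hσ
  exact ⟨σ, (Finset.mem_filter.1 hσ).1, (Finset.mem_filter.1 hσ).2⟩

/-- The combinatorial endgame: the equality data implies the block structure. -/
lemma endgame {F : Finset (Fin n)} {f : Fin n → Fin n} (hf : Set.InjOn f F)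
    (hminor : ∀ a ∈ (F.image f)ᶜ, ∀ c ∈ Fᶜ, E a c →
      (Sset E (insert c F) (Function.update f c a)).Nonempty ∧
      Blockish E (insert c F) (Function.update f c a))
    (huni : ∀ b ∈ (F.image f)ᶜ, ∀ c' ∈ Fᶜ, E b c' → rdeg E F b = 1 →
      ∀ σ ∈ Sset E F f, σ c' = b) :
    Blockish E F f := by
  intro a ha a' ha' c hcC c' hc'C hEac hEa'c hEac'
  by_cases haa : a = a'
  · exact haa ▸ hEac'
  by_cases hcc : c = c'
  · exact hcc ▸ hEa'c
  have hcF : c ∉ F := Finset.mem_compl.1 hcC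
  have hc'F : c' ∉ F := Finset.mem_compl.1 hc'C
  by_cases hpiv : ∃ a₀ ∈ (F.image f)ᶜ, a₀ ≠ a ∧ a₀ ≠ a' ∧
      ∃ c₀ ∈ Fᶜ, c₀ ≠ c ∧ c₀ ≠ c' ∧ E a₀ c₀
  · obtain ⟨a₀, ha₀, ha₀a, ha₀a', c₀, hc₀, hc₀c, hc₀c', hE₀⟩ := hpiv
    have hbl := (hminor a₀ ha₀ c₀ hc₀ hE₀).2
    have hrow : ∀ x, x ∈ (F.image f)ᶜ → x ≠ a₀ →
        x ∈ (((insert c₀ F).image (Function.update f c₀ a₀))ᶜ) := by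
      intro x hx hxa₀
      rw [image_update (Finset.mem_compl.1 hc₀)]
      rw [Finset.mem_compl, Finset.mem_insert]
      push_neg
      exact ⟨hxa₀, Finset.mem_compl.1 hx⟩
    have hcol : ∀ y, y ∈ Fᶜ → y ≠ c₀ → y ∈ ((insert c₀ F)ᶜ) := by
      intro y hy hyc₀
      rw [Finset.mem_compl, Finset.mem_insert]
      push_neg
      exact ⟨hyc₀, Finset.mem_compl.1 hy⟩
    exact hbl a (hrow a ha (fun h => ha₀a h.symm)) a' (hrow a' ha' (fun h => ha₀a' h.symm))
      c (hcol c hcC (fun h => hc₀c h.symm)) c' (hcol c' hc'C (fun h => hc₀c' h.symm))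
      hEac hEa'c hEac'
  · push_neg at hpiv
    obtain ⟨σ, hσS, hσc⟩ := exists_sigma hcF hEa'c (hminor a' ha' c hcC hEa'c).1
    have hkey : ∀ b ∈ (F.image f)ᶜ, b ≠ a → b ≠ a' → b = σ c' := by
      intro b hb hba hba'
      have h1 : σ⁻¹ b ∈ Fᶜ := Finset.mem_compl.2 (inv_notMem hσS (Finset.mem_compl.1 hb))
      have h2 : E b (σ⁻¹ b) := E_inv hσS (Finset.mem_compl.1 hb)
      by_cases h3 : σ⁻¹ b = c
      · exact absurd (by rw [← hσc, ← h3, Equiv.Perm.apply_inv_self]) hba'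
      · by_cases h4 : σ⁻¹ b = c'
        · rw [← h4, Equiv.Perm.apply_inv_self]
        · exact absurd h2 (hpiv b hb hba hba' _ h1 h3 h4)
    have hRsub : (F.image f)ᶜ ⊆ {a, a', σ c'} := by
      intro b hb
      by_cases hba : b = a
      · simp [hba]
      by_cases hba' : b = a'
      · simp [hba']
      · simp [hkey b hb hba hba']
    have hσcmem : σ c ∈ (F.image f)ᶜ := Finset.mem_compl.2 (sigma_notMem_image hσS hcF)
    have hσc'mem : σ c' ∈ (F.image f)ᶜ := Finset.mem_compl.2 (sigma_notMem_image hσS hc'F)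
    have hcard3 : ((F.image f)ᶜ).card ≤ 3 := by
      refine le_trans (Finset.card_le_card hRsub) ?_
      refine le_trans (Finset.card_insert_le _ _) ?_
      have h5 := Finset.card_insert_le a' ({σ c'} : Finset (Fin n))
      simp only [Finset.card_singleton] at h5
      omega
    have hcardRC : ((F.image f)ᶜ).card = Fᶜ.card := card_compl_image hf
    have hsub2 : ({a, a'} : Finset (Fin n)) ⊆ (F.image f)ᶜ := by
      intro x hx
      rcases Finset.mem_insert.1 hx with rfl | hx
      · exact ha
      · rwa [Finset.mem_singleton.1 hx]
    have hc2 : ({a, a'} : Finset (Fin n)).card = 2 := by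
      rw [Finset.card_insert_of_notMem (by simpa using haa), Finset.card_singleton]
    have hcard2 : 2 ≤ ((F.image f)ᶜ).card := hc2 ▸ Finset.card_le_card hsub2
    rcases eq_or_lt_of_le hcard2 with hR2 | hR3
    · -- |R| = 2 : R = {a,a'}
      have hReq : (F.image f)ᶜ = {a, a'} :=
        (Finset.eq_of_subset_of_card_le hsub2 (by rw [hc2, ← hR2])).symm
      obtain ⟨σ', hσ'S, hσ'c⟩ := exists_sigma hcF hEac (hminor a ha c hcC hEac).1
      have hx : σ' c' ∈ (F.image f)ᶜ := Finset.mem_compl.2 (sigma_notMem_image hσ'S hc'F)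
      rw [hReq] at hx
      rcases Finset.mem_insert.1 hx with hxa | hx
      · exact absurd (σ'.injective (hxa.trans hσ'c.symm)).symm hcc
      · have hxa' : σ' c' = a' := Finset.mem_singleton.1 hx
        have hE := (mem_Sset.1 hσ'S).2 c' hc'F
        rwa [hxa'] at hE
    · -- |R| = 3
      have hR3' : ((F.image f)ᶜ).card = 3 := le_antisymm hcard3 hR3
      have hex : ∃ b₀ ∈ (F.image f)ᶜ, b₀ ∉ ({a, a'} : Finset (Fin n)) := by
        by_contra hno
        push_neg at hno
        have := Finset.card_le_card (fun x hx => hno x hx)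
        omega
      obtain ⟨b₀, hb₀R, hb₀⟩ := hex
      simp only [Finset.mem_insert, Finset.mem_singleton, not_or] at hb₀
      obtain ⟨hb₀a, hb₀a'⟩ := hb₀
      have hb₀σ : b₀ = σ c' := hkey b₀ hb₀R hb₀a hb₀a'
      have hEb₀c' : E b₀ c' := by
        have := (mem_Sset.1 hσS).2 c' hc'F
        rwa [← hb₀σ] at this
      have hc₃C : σ⁻¹ a ∈ Fᶜ := Finset.mem_compl.2 (inv_notMem hσS (Finset.mem_compl.1 ha))
      have hEac₃ : E a (σ⁻¹ a) := E_inv hσS (Finset.mem_compl.1 ha)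
      have hc₃c : σ⁻¹ a ≠ c := by
        intro h
        apply haa
        rw [← hσc, ← h, Equiv.Perm.apply_inv_self]
      have hc₃c' : σ⁻¹ a ≠ c' := by
        intro h
        apply hb₀a
        rw [hb₀σ, ← h, Equiv.Perm.apply_inv_self]
      by_cases hEb₀c : E b₀ c
      · obtain ⟨σ'', hσ''S, hσ''c⟩ := exists_sigma hcF hEb₀c (hminor b₀ hb₀R c hcC hEb₀c).1
        have hxR : σ'' c' ∈ (F.image f)ᶜ :=
          Finset.mem_compl.2 (sigma_notMem_image hσ''S hc'F)
        have hxb₀ : σ'' c' ≠ b₀ := by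
          intro h
          exact hcc (σ''.injective (h.trans hσ''c.symm)).symm
        have hsub3 : ({a, a', b₀} : Finset (Fin n)) ⊆ (F.image f)ᶜ := by
          intro x hx
          rcases Finset.mem_insert.1 hx with rfl | hx
          · exact ha
          rcases Finset.mem_insert.1 hx with rfl | hx
          · exact ha'
          · rwa [Finset.mem_singleton.1 hx]
        have hc3 : ({a, a', b₀} : Finset (Fin n)).card = 3 := by
          rw [Finset.card_insert_of_notMem (by
            simp only [Finset.mem_insert, Finset.mem_singleton, not_or]
            exact ⟨haa, fun h => hb₀a h.symm⟩),
            Finset.card_insert_of_notMem (by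
              simp only [Finset.mem_singleton]
              exact fun h => hb₀a' h.symm),
            Finset.card_singleton]
        have hReq3 : (F.image f)ᶜ = {a, a', b₀} :=
          (Finset.eq_of_subset_of_card_le hsub3 (by rw [hc3, hR3'])).symm
        have hx3 := hxR
        rw [hReq3] at hx3
        rcases Finset.mem_insert.1 hx3 with hxa | hx3
        · -- σ'' c' = a : use the third column
          have hc₄C : σ''⁻¹ a' ∈ Fᶜ :=
            Finset.mem_compl.2 (inv_notMem hσ''S (Finset.mem_compl.1 ha'))
          have hEa'c₄ : E a' (σ''⁻¹ a') := E_inv hσ''S (Finset.mem_compl.1 ha')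
          have hc₄c : σ''⁻¹ a' ≠ c := by
            intro h
            apply hb₀a'
            rw [← hσ''c, ← h, Equiv.Perm.apply_inv_self]
          have hc₄c' : σ''⁻¹ a' ≠ c' := by
            intro h
            apply haa
            rw [← hxa, ← h, Equiv.Perm.apply_inv_self]
          -- C = {c, c', σ⁻¹ a}
          have hsubC : ({c, c', σ⁻¹ a} : Finset (Fin n)) ⊆ Fᶜ := by
            intro y hy
            rcases Finset.mem_insert.1 hy with rfl | hy
            · exact hcC
            rcases Finset.mem_insert.1 hy with rfl | hy
            · exact hc'C
            · rwa [Finset.mem_singleton.1 hy]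
          have hcC3 : ({c, c', σ⁻¹ a} : Finset (Fin n)).card = 3 := by
            rw [Finset.card_insert_of_notMem (by
              simp only [Finset.mem_insert, Finset.mem_singleton, not_or]
              exact ⟨hcc, fun h => hc₃c h.symm⟩),
              Finset.card_insert_of_notMem (by
                simp only [Finset.mem_singleton]
                exact fun h => hc₃c' h.symm),
              Finset.card_singleton]
          have hCeq : Fᶜ = {c, c', σ⁻¹ a} :=
            (Finset.eq_of_subset_of_card_le hsubC (by rw [hcC3, ← hcardRC, hR3'])).symm
          have hc₄ : σ''⁻¹ a' = σ⁻¹ a := by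
            have hy := hc₄C
            rw [hCeq] at hy
            rcases Finset.mem_insert.1 hy with h | hy
            · exact absurd h hc₄c
            rcases Finset.mem_insert.1 hy with h | hy
            · exact absurd h hc₄c'
            · exact Finset.mem_singleton.1 hy
          have hEa'c₃ : E a' (σ⁻¹ a) := by rwa [hc₄] at hEa'c₄
          -- apply the minor (b₀, c)
          have hbl := (hminor b₀ hb₀R c hcC hEb₀c).2
          have hrow : ∀ x, x ∈ (F.image f)ᶜ → x ≠ b₀ →
              x ∈ (((insert c F).image (Function.update f c b₀))ᶜ) := by
            intro x hx hxb
            rw [image_update hcF, Finset.mem_compl, Finset.mem_insert]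
            push_neg
            exact ⟨hxb, Finset.mem_compl.1 hx⟩
          have hcol : ∀ y, y ∈ Fᶜ → y ≠ c → y ∈ ((insert c F)ᶜ) := by
            intro y hy hyc
            rw [Finset.mem_compl, Finset.mem_insert]
            push_neg
            exact ⟨hyc, Finset.mem_compl.1 hy⟩
          exact hbl a (hrow a ha (fun h => hb₀a h.symm)) a' (hrow a' ha' (fun h => hb₀a' h.symm))
            (σ⁻¹ a) (hcol _ hc₃C hc₃c) c' (hcol _ hc'C (fun h => hcc h.symm))
            hEac₃ hEa'c₃ hEac'
        · -- σ'' c' = a'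
          have hxa' : σ'' c' = a' := by
            rcases Finset.mem_insert.1 hx3 with h | h
            · exact h
            · exact absurd (Finset.mem_singleton.1 h) hxb₀
          have hE := (mem_Sset.1 hσ''S).2 c' hc'F
          rwa [hxa'] at hE
      · -- ¬ E b₀ c : row b₀ has degree 1
        have hN : Fᶜ.filter (fun d => E b₀ d) = {c'} := by
          apply Finset.eq_singleton_iff_unique_mem.2
          refine ⟨Finset.mem_filter.2 ⟨hc'C, hEb₀c'⟩, fun d hd => ?_⟩
          obtain ⟨hdC, hEd⟩ := Finset.mem_filter.1 hd
          by_cases hdc : d = c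
          · exact absurd (hdc ▸ hEd) hEb₀c
          by_cases hdc' : d = c'
          · exact hdc'
          · exact absurd hEd (hpiv b₀ hb₀R hb₀a hb₀a' d hdC hdc hdc')
        have hr1 : rdeg E F b₀ = 1 := by
          unfold rdeg
          rw [hN, Finset.card_singleton]
        obtain ⟨σ₀, hσ₀S, hσ₀c'⟩ := exists_sigma hc'F hEac' (hminor a ha c' hc'C hEac').1
        have hb := huni b₀ hb₀R c' hc'C hEb₀c' hr1 σ₀ hσ₀S
        exact absurd (hb.symm.trans hσ₀c') hb₀a


lemma gg_arith (k mm : ℕ) (hk : 1 ≤ k) (hkm : k ≤ mm) :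
    (k:ℝ) * ((1/((k-1:ℕ):ℝ)) * Real.log (Nat.factorial (k-1))) +
      ((mm - k : ℕ):ℝ) * ((1/(k:ℝ)) * Real.log (Nat.factorial k)) -
      (1/((k-1:ℕ):ℝ)) * Real.log (Nat.factorial (k-1))
      = (mm:ℝ) * ((1/(k:ℝ)) * Real.log (Nat.factorial k)) - Real.log k := by
  rcases eq_or_lt_of_le hk with hk1 | hk2
  · rw [← hk1]
    norm_num [Nat.factorial]
  · have hk0 : (k:ℝ) ≠ 0 := by positivity
    have hc1 : ((k-1:ℕ):ℝ) = (k:ℝ) - 1 := by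
      rw [Nat.cast_sub hk, Nat.cast_one]
    have hc1' : (k:ℝ) - 1 ≠ 0 := by
      have : (2:ℝ) ≤ (k:ℝ) := by exact_mod_cast hk2
      linarith
    have hfac : Real.log (Nat.factorial k) = Real.log k + Real.log (Nat.factorial (k-1)) := by
      rw [← Nat.mul_factorial_pred (show k ≠ 0 by omega), Nat.cast_mul,
        Real.log_mul hk0 (by exact_mod_cast (Nat.factorial_ne_zero (k-1)))]
    have hmk : ((mm-k:ℕ):ℝ) = (mm:ℝ) - (k:ℝ) := Nat.cast_sub hkm
    rw [hfac, hc1, hmk]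
    field_simp
    ring

lemma per_sigma {F : Finset (Fin n)} {f : Fin n → Fin n} (hf : Set.InjOn f F)
    {σ : Equiv.Perm (Fin n)} (hσ : σ ∈ Sset E F f)
    (hr : ∀ b ∈ (F.image f)ᶜ, 1 ≤ rdeg E F b) :
    ∑ c ∈ Fᶜ, Bsum E (insert c F) (Function.update f c (σ c))
      = (Fᶜ.card : ℝ) * Bsum E F f - ∑ b ∈ (F.image f)ᶜ, Real.log (rdeg E F b) := by
  set gg : ℕ → ℝ := fun k => (1/(k:ℝ)) * Real.log (Nat.factorial k) with hgg
  have hstep1 : ∀ c ∈ Fᶜ, Bsum E (insert c F) (Function.update f c (σ c))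
      = ∑ b ∈ ((F.image f)ᶜ).erase (σ c),
          gg (if E b c then rdeg E F b - 1 else rdeg E F b) := by
    intro c hc
    unfold Bsum
    rw [image_update (Finset.mem_compl.1 hc), Finset.compl_insert]
    exact Finset.sum_congr rfl fun b _ => by rw [rdeg_insert (Finset.mem_compl.1 hc)]
  rw [Finset.sum_congr rfl hstep1]
  have hmem : ∀ c ∈ Fᶜ, σ c ∈ (F.image f)ᶜ := fun c hc =>
    Finset.mem_compl.2 (sigma_notMem_image hσ (Finset.mem_compl.1 hc))
  have hstep2 : ∀ c ∈ Fᶜ,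
      ∑ b ∈ ((F.image f)ᶜ).erase (σ c), gg (if E b c then rdeg E F b - 1 else rdeg E F b)
      = (∑ b ∈ (F.image f)ᶜ, gg (if E b c then rdeg E F b - 1 else rdeg E F b))
          - gg (rdeg E F (σ c) - 1) := by
    intro c hc
    rw [Finset.sum_erase_eq_sub (hmem c hc),
      if_pos ((mem_Sset.1 hσ).2 c (Finset.mem_compl.1 hc))]
  rw [Finset.sum_congr rfl hstep2, Finset.sum_sub_distrib]
  have hre : ∑ c ∈ Fᶜ, gg (rdeg E F (σ c) - 1)
      = ∑ b ∈ (F.image f)ᶜ, gg (rdeg E F b - 1) := by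
    conv_rhs => rw [← image_Sset hf hσ]
    rw [Finset.sum_image (fun x _ y _ h => σ.injective h)]
  rw [hre, Finset.sum_comm]
  unfold Bsum
  rw [Finset.mul_sum, ← Finset.sum_sub_distrib, ← Finset.sum_sub_distrib]
  apply Finset.sum_congr rfl
  intro b hb
  have hsplit : ∑ c ∈ Fᶜ, gg (if E b c then rdeg E F b - 1 else rdeg E F b)
      = (rdeg E F b : ℝ) * gg (rdeg E F b - 1)
        + ((Fᶜ.card - rdeg E F b : ℕ) : ℝ) * gg (rdeg E F b) := by
    simp only [apply_ite gg]
    rw [Finset.sum_ite, Finset.sum_const, Finset.sum_const, nsmul_eq_mul, nsmul_eq_mul]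
    have h1 : (Fᶜ.filter (fun c => E b c)).card = rdeg E F b := rfl
    have h2 : (Fᶜ.filter (fun c => ¬ E b c)).card = Fᶜ.card - rdeg E F b := by
      have := Finset.card_filter_add_card_filter_not (s := Fᶜ)
        (p := fun c => E b c)
      omega
    rw [h1, h2]
  rw [hsplit]
  exact gg_arith (rdeg E F b) Fᶜ.card (hr b hb) (Finset.card_filter_le _ _)

/-- The main induction: Bregman's inequality in log form, together with its equality case. -/
theorem main (m : ℕ) : ∀ (F : Finset (Fin n)) (f : Fin n → Fin n), Fᶜ.card = m →
    Set.InjOn f F →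
    Real.log ((Sset E F f).card) ≤ Bsum E F f ∧
      (1 ≤ (Sset E F f).card → Real.log ((Sset E F f).card) = Bsum E F f →
        Blockish E F f) := by
  induction m using Nat.strong_induction_on with
  | _ m IH =>
  intro F f hm hf
  rcases Nat.eq_zero_or_pos m with rfl | hmpos
  · -- base case : `F = univ`
    have hFc : Fᶜ = ∅ := Finset.card_eq_zero.1 hm
    have hB : Bsum E F f = 0 := by
      apply Finset.sum_eq_zero
      intro b _
      have h0 : rdeg E F b = 0 := by
        unfold rdeg
        rw [hFc]
        simp
      rw [h0]
      simp [Nat.factorial]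
    have hcard : (Sset E F f).card ≤ 1 := by
      apply Finset.card_le_one.2
      intro σ hσ τ hτ
      apply Equiv.ext
      intro x
      have hx : x ∈ F := by
        by_contra hx
        have := Finset.mem_compl.2 hx
        rw [hFc] at this
        exact absurd this (Finset.notMem_empty x)
      rw [(mem_Sset.1 hσ).1 x hx, (mem_Sset.1 hτ).1 x hx]
    constructor
    · rw [hB]
      rcases Nat.le_one_iff_eq_zero_or_eq_one.1 hcard with h | h <;> rw [h] <;> simp
    · intro _ _ a _ a' _ c hc
      rw [hFc] at hc
      exact absurd hc (Finset.notMem_empty c)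
  -- inductive step
  by_cases hp0 : (Sset E F f).card = 0
  · constructor
    · rw [hp0]
      simp only [Nat.cast_zero, Real.log_zero]
      exact Bsum_nonneg F f
    · intro h1
      omega
  have hp1 : 1 ≤ (Sset E F f).card := Nat.one_le_iff_ne_zero.2 hp0
  obtain ⟨σ₁, hσ₁⟩ : (Sset E F f).Nonempty := Finset.card_pos.1 hp1
  set P : ℝ := ((Sset E F f).card : ℝ) with hPdef
  have hP1 : (1:ℝ) ≤ P := by rw [hPdef]; exact_mod_cast hp1
  have hPpos : 0 < P := lt_of_lt_of_le zero_lt_one hP1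
  have hRC : ((F.image f)ᶜ).card = m := by rw [card_compl_image hf, hm]
  have hrpos : ∀ a ∈ (F.image f)ᶜ, 1 ≤ rdeg E F a := by
    intro a ha
    have h1 : σ₁⁻¹ a ∈ Fᶜ.filter (fun c => E a c) :=
      Finset.mem_filter.2 ⟨Finset.mem_compl.2 (inv_notMem hσ₁ (Finset.mem_compl.1 ha)),
        E_inv hσ₁ (Finset.mem_compl.1 ha)⟩
    exact Finset.card_pos.2 ⟨_, h1⟩
  have hfilt : ∀ a, (Fᶜ.filter (fun c => E a c)).card = rdeg E F a := fun a => rfl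
  have hins : ∀ c ∈ Fᶜ, ((insert c F)ᶜ).card = m - 1 := by
    intro c hc
    rw [Finset.compl_insert, Finset.card_erase_of_mem hc, hm]
  have hIH : ∀ a ∈ (F.image f)ᶜ, ∀ c ∈ Fᶜ,
      Real.log ((Sset E (insert c F) (Function.update f c a)).card)
          ≤ Bsum E (insert c F) (Function.update f c a) ∧
        (1 ≤ (Sset E (insert c F) (Function.update f c a)).card →
          Real.log ((Sset E (insert c F) (Function.update f c a)).card)
            = Bsum E (insert c F) (Function.update f c a) →
          Blockish E (insert c F) (Function.update f c a)) := by
    intro a ha c hc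
    exact IH (m-1) (by omega) _ _ (hins c hc)
      (injOn_update hf (Finset.mem_compl.1 hc) (Finset.mem_compl.1 ha))
  set t : Fin n → Fin n → ℝ :=
    fun a c => ((Sset E (insert c F) (Function.update f c a)).card : ℝ) with ht
  set Bm : Fin n → Fin n → ℝ :=
    fun a c => Bsum E (insert c F) (Function.update f c a) with hBm
  have htnn : ∀ a c, 0 ≤ t a c := fun a c => Nat.cast_nonneg _
  have hrow : ∀ a ∈ (F.image f)ᶜ, P = ∑ c ∈ Fᶜ.filter (fun c => E a c), t a c := by
    intro a ha
    rw [hPdef, ht]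
    dsimp only
    exact_mod_cast congrArg (Nat.cast (R := ℝ)) (row_partition (E := E) (Finset.mem_compl.1 ha))
  have hjen := fun a (ha : a ∈ (F.image f)ᶜ) =>
    jensen_row (Fᶜ.filter (fun c => E a c)) (t a) (fun c _ => htnn a c) P (hrow a ha)
      (Finset.card_pos.1 (by rw [hfilt a]; exact hrpos a ha))
  set A1 : Fin n → ℝ := fun a => P * Real.log (rdeg E F a)
    + ∑ c ∈ Fᶜ.filter (fun c => E a c), t a c * Real.log (t a c) with hA1
  set A2 : Fin n → ℝ := fun a => P * Real.log (rdeg E F a)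
    + ∑ c ∈ Fᶜ.filter (fun c => E a c), t a c * Bm a c with hA2
  have hchain1 : ∀ a ∈ (F.image f)ᶜ, P * Real.log P ≤ A1 a := by
    intro a ha
    have h := (hjen a ha).1
    rw [hfilt a] at h
    rw [hA1]
    dsimp only
    linarith
  have hchain2 : ∀ a ∈ (F.image f)ᶜ, A1 a ≤ A2 a := by
    intro a ha
    rw [hA1, hA2]
    dsimp only
    apply add_le_add_right
    apply Finset.sum_le_sum
    intro c hc
    exact mul_le_mul_of_nonneg_left ((hIH a ha c (Finset.mem_filter.1 hc).1).1) (htnn a c)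
  have hinner : ∀ c ∈ Fᶜ, ∑ σ ∈ Sset E F f, Bm (σ c) c
      = ∑ a ∈ ((F.image f)ᶜ).filter (fun a => E a c), t a c * Bm a c := by
    intro c hc
    have hmap : ∀ σ ∈ Sset E F f, σ c ∈ ((F.image f)ᶜ).filter (fun a => E a c) := fun σ hσ =>
      Finset.mem_filter.2 ⟨Finset.mem_compl.2 (sigma_notMem_image hσ (Finset.mem_compl.1 hc)),
        (mem_Sset.1 hσ).2 c (Finset.mem_compl.1 hc)⟩
    rw [← Finset.sum_fiberwise_of_maps_to hmap (fun σ => Bm (σ c) c)]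
    apply Finset.sum_congr rfl
    intro a ha
    have hcg : ∀ σ ∈ (Sset E F f).filter (fun σ => σ c = a), Bm (σ c) c = Bm a c :=
      fun σ hσ => by rw [(Finset.mem_filter.1 hσ).2]
    rw [Finset.sum_congr rfl hcg, Finset.sum_const,
      filter_Sset (Finset.mem_compl.1 hc) (Finset.mem_filter.1 ha).2, nsmul_eq_mul]
  have hswap : ∀ X : Fin n → Fin n → ℝ,
      ∑ c ∈ Fᶜ, ∑ a ∈ ((F.image f)ᶜ).filter (fun a => E a c), X a c
        = ∑ a ∈ (F.image f)ᶜ, ∑ c ∈ Fᶜ.filter (fun c => E a c), X a c := by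
    intro X
    calc ∑ c ∈ Fᶜ, ∑ a ∈ ((F.image f)ᶜ).filter (fun a => E a c), X a c
        = ∑ c ∈ Fᶜ, ∑ a ∈ (F.image f)ᶜ, if E a c then X a c else 0 :=
          Finset.sum_congr rfl fun c _ => Finset.sum_filter _ _
      _ = ∑ a ∈ (F.image f)ᶜ, ∑ c ∈ Fᶜ, if E a c then X a c else 0 := Finset.sum_comm
      _ = ∑ a ∈ (F.image f)ᶜ, ∑ c ∈ Fᶜ.filter (fun c => E a c), X a c :=
          Finset.sum_congr rfl fun a _ => (Finset.sum_filter _ _).symm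
  have hident : ∑ a ∈ (F.image f)ᶜ, ∑ c ∈ Fᶜ.filter (fun c => E a c), t a c * Bm a c
      = ∑ σ ∈ Sset E F f, ∑ c ∈ Fᶜ, Bm (σ c) c := by
    rw [← hswap]
    calc ∑ c ∈ Fᶜ, ∑ a ∈ ((F.image f)ᶜ).filter (fun a => E a c), t a c * Bm a c
        = ∑ c ∈ Fᶜ, ∑ σ ∈ Sset E F f, Bm (σ c) c :=
          Finset.sum_congr rfl fun c hc => (hinner c hc).symm
      _ = ∑ σ ∈ Sset E F f, ∑ c ∈ Fᶜ, Bm (σ c) c := Finset.sum_comm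
  have hpersig : ∑ σ ∈ Sset E F f, ∑ c ∈ Fᶜ, Bm (σ c) c
      = P * ((m:ℝ) * Bsum E F f - ∑ b ∈ (F.image f)ᶜ, Real.log (rdeg E F b)) := by
    have hcg : ∀ σ ∈ Sset E F f, ∑ c ∈ Fᶜ, Bm (σ c) c
        = (m:ℝ) * Bsum E F f - ∑ b ∈ (F.image f)ᶜ, Real.log (rdeg E F b) := by
      intro σ hσ
      rw [hBm]
      dsimp only
      rw [per_sigma hf hσ hrpos, hm]
    rw [Finset.sum_congr rfl hcg, Finset.sum_const, nsmul_eq_mul]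
  have hE3 : ∑ a ∈ (F.image f)ᶜ, A2 a = (m:ℝ) * P * Bsum E F f := by
    rw [hA2]
    dsimp only
    rw [Finset.sum_add_distrib, ← Finset.mul_sum, hident, hpersig]
    ring
  have hLHS : ∑ _a ∈ (F.image f)ᶜ, (P * Real.log P) = (m:ℝ) * (P * Real.log P) := by
    rw [Finset.sum_const, hRC, nsmul_eq_mul]
  have hsum1 : ∑ _a ∈ (F.image f)ᶜ, (P * Real.log P) ≤ ∑ a ∈ (F.image f)ᶜ, A1 a :=
    Finset.sum_le_sum hchain1
  have hsum2 : ∑ a ∈ (F.image f)ᶜ, A1 a ≤ ∑ a ∈ (F.image f)ᶜ, A2 a :=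
    Finset.sum_le_sum hchain2
  have hmR : (0:ℝ) < m := by exact_mod_cast hmpos
  have part1 : Real.log P ≤ Bsum E F f := by
    have hineq : (m:ℝ) * (P * Real.log P) ≤ (m:ℝ) * (P * Bsum E F f) := by
      calc (m:ℝ) * (P * Real.log P) = ∑ _a ∈ (F.image f)ᶜ, (P * Real.log P) := hLHS.symm
        _ ≤ ∑ a ∈ (F.image f)ᶜ, A1 a := hsum1
        _ ≤ ∑ a ∈ (F.image f)ᶜ, A2 a := hsum2
        _ = (m:ℝ) * P * Bsum E F f := hE3
        _ = (m:ℝ) * (P * Bsum E F f) := by ring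
    exact le_of_mul_le_mul_left (le_of_mul_le_mul_left hineq hmR) hPpos
  refine ⟨part1, fun _ heq => ?_⟩
  have heqtot : ∑ a ∈ (F.image f)ᶜ, A2 a = ∑ _a ∈ (F.image f)ᶜ, (P * Real.log P) := by
    rw [hLHS, hE3, heq]
    ring
  have he1 : ∀ a ∈ (F.image f)ᶜ, P * Real.log P = A1 a :=
    (Finset.sum_eq_sum_iff_of_le hchain1).1
      (le_antisymm hsum1 (heqtot ▸ hsum2))
  have he2 : ∀ a ∈ (F.image f)ᶜ, A1 a = A2 a :=
    (Finset.sum_eq_sum_iff_of_le hchain2).1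
      (le_antisymm hsum2 (by rw [heqtot]; exact hsum1))
  have huniform : ∀ a ∈ (F.image f)ᶜ, ∀ c ∈ Fᶜ.filter (fun c => E a c),
      t a c = P / (rdeg E F a : ℝ) := by
    intro a ha c hc
    have heqa : P * Real.log P - P * Real.log ((Fᶜ.filter (fun c => E a c)).card)
        = ∑ c ∈ Fᶜ.filter (fun c => E a c), t a c * Real.log (t a c) := by
      have h := he1 a ha
      rw [hA1] at h
      dsimp only at h
      rw [hfilt a]
      linarith
    have := (hjen a ha).2 heqa c hc
    rwa [hfilt a] at this
  have hlogeq : ∀ a ∈ (F.image f)ᶜ, ∀ c ∈ Fᶜ, E a c →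
      1 ≤ (Sset E (insert c F) (Function.update f c a)).card ∧
      Real.log ((Sset E (insert c F) (Function.update f c a)).card)
        = Bsum E (insert c F) (Function.update f c a) := by
    intro a ha c hc hE
    have hcf : c ∈ Fᶜ.filter (fun c => E a c) := Finset.mem_filter.2 ⟨hc, hE⟩
    have htval := huniform a ha c hcf
    have htpos : 0 < t a c := by
      rw [htval]
      apply div_pos hPpos
      exact_mod_cast hrpos a ha
    have hc1 : 1 ≤ (Sset E (insert c F) (Function.update f c a)).card := by
      have hcast : (0:ℝ) < ((Sset E (insert c F) (Function.update f c a)).card : ℝ) := by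
        simpa [ht] using htpos
      exact_mod_cast hcast
    have hterm : ∀ cc ∈ Fᶜ.filter (fun c => E a c),
        t a cc * Real.log (t a cc) ≤ t a cc * Bm a cc := fun cc hcc =>
      mul_le_mul_of_nonneg_left ((hIH a ha cc (Finset.mem_filter.1 hcc).1).1) (htnn a cc)
    have hsums : ∑ cc ∈ Fᶜ.filter (fun c => E a c), t a cc * Real.log (t a cc)
        = ∑ cc ∈ Fᶜ.filter (fun c => E a c), t a cc * Bm a cc := by
      have h := he2 a ha
      rw [hA1, hA2] at h
      dsimp only at h
      linarith
    have hceq := (Finset.sum_eq_sum_iff_of_le hterm).1 hsums c hcf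
    have hfin : Real.log (t a c) = Bm a c := mul_left_cancel₀ (ne_of_gt htpos) hceq
    exact ⟨hc1, hfin⟩
  have hminorX : ∀ a ∈ (F.image f)ᶜ, ∀ c ∈ Fᶜ, E a c →
      (Sset E (insert c F) (Function.update f c a)).Nonempty ∧
      Blockish E (insert c F) (Function.update f c a) := by
    intro a ha c hc hE
    obtain ⟨h1, h2⟩ := hlogeq a ha c hc hE
    exact ⟨Finset.card_pos.1 h1, (hIH a ha c hc).2 h1 h2⟩
  have huniX : ∀ b ∈ (F.image f)ᶜ, ∀ c' ∈ Fᶜ, E b c' → rdeg E F b = 1 →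
      ∀ σ ∈ Sset E F f, σ c' = b := by
    intro b hb c' hc' hE hr1 σ hσ
    have hcf : c' ∈ Fᶜ.filter (fun c => E b c) := Finset.mem_filter.2 ⟨hc', hE⟩
    have htval := huniform b hb c' hcf
    rw [hr1] at htval
    have hcards : (Sset E (insert c' F) (Function.update f c' b)).card
        = (Sset E F f).card := by
      have h3 : t b c' = P := by rw [htval]; simp
      simp only [ht, hPdef] at h3
      exact_mod_cast h3
    have hfe : (Sset E F f).filter (fun σ => σ c' = b) = Sset E F f := by
      apply Finset.eq_of_subset_of_card_le (Finset.filter_subset _ _)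
      rw [filter_Sset (Finset.mem_compl.1 hc') hE, hcards]
    rw [← hfe] at hσ
    exact (Finset.mem_filter.1 hσ).2
  exact endgame hf hminorX huniX


section FinalAux

variable {n : ℕ}

lemma min'_congr {α : Type*} [LinearOrder α] {s t : Finset α} (h : s = t)
    (hs : s.Nonempty) (ht : t.Nonempty) : s.min' hs = t.min' ht := by
  subst h; rfl

lemma perm_eq_card (A : Matrix (Fin n) (Fin n) ℕ) (hA : ∀ i j, A i j = 0 ∨ A i j = 1) :
    A.permanent
      = (Finset.univ.filter (fun σ : Equiv.Perm (Fin n) => ∀ c, A (σ c) c = 1)).card := by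
  rw [Matrix.permanent, Finset.card_filter]
  apply Finset.sum_congr rfl
  intro σ _
  by_cases h : ∀ c, A (σ c) c = 1
  · rw [if_pos h, Finset.prod_eq_one (fun c _ => h c)]
  · rw [if_neg h]
    push_neg at h
    obtain ⟨c, hc⟩ := h
    apply Finset.prod_eq_zero (Finset.mem_univ c)
    rcases hA (σ c) c with h0 | h1
    · exact h0
    · exact absurd h1 hc

lemma count_fiber_perms (c : Fin n → Fin n) :
    (Finset.univ.filter (fun σ : Equiv.Perm (Fin n) => ∀ i, c (σ i) = c i)).card
      = ∏ v : Fin n, (Finset.univ.filter (fun x => c x = v)).card.factorial := by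
  classical
  have e : {σ : Equiv.Perm (Fin n) // ∀ i, c (σ i) = c i}
      ≃ (∀ v : Fin n, Equiv.Perm {x : Fin n // c x = v}) :=
    { toFun := fun σ v => Equiv.Perm.subtypePerm σ.1 (fun x => by rw [σ.2 x])
      invFun := fun g => ⟨((Equiv.sigmaFiberEquiv c).symm.trans
          (Equiv.sigmaCongrRight g)).trans (Equiv.sigmaFiberEquiv c),
          fun i => (g (c i) ⟨i, rfl⟩).2⟩
      left_inv := fun σ => by
        apply Subtype.ext
        apply Equiv.ext
        intro x
        rfl
      right_inv := fun g => by
        funext v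
        apply Equiv.ext
        intro y
        apply Subtype.ext
        obtain ⟨x, hx⟩ := y
        subst hx
        rfl }
  calc (Finset.univ.filter (fun σ : Equiv.Perm (Fin n) => ∀ i, c (σ i) = c i)).card
      = Fintype.card {σ : Equiv.Perm (Fin n) // ∀ i, c (σ i) = c i} :=
        (Fintype.card_subtype _).symm
    _ = Fintype.card (∀ v : Fin n, Equiv.Perm {x : Fin n // c x = v}) := Fintype.card_congr e
    _ = ∏ v : Fin n, (Fintype.card {x : Fin n // c x = v}).factorial := by
        rw [Fintype.card_pi]
        exact Finset.prod_congr rfl fun v _ => Fintype.card_perm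
    _ = ∏ v : Fin n, (Finset.univ.filter (fun x => c x = v)).card.factorial :=
        Finset.prod_congr rfl fun v _ => by rw [Fintype.card_subtype]

/-- The incidence relation of a `0-1` matrix. -/
def Erel (A : Matrix (Fin n) (Fin n) ℕ) : Fin n → Fin n → Prop := fun a c => A a c = 1

instance (A : Matrix (Fin n) (Fin n) ℕ) : DecidableRel (Erel A) :=
  fun a c => inferInstanceAs (Decidable (A a c = 1))

lemma Erel_iff (A : Matrix (Fin n) (Fin n) ℕ) (a c : Fin n) : Erel A a c ↔ A a c = 1 := Iff.rfl

end FinalAux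

end BregmanMincAux

open BregmanMincAux

/-- Equality case of the Bregman–Minc inequality: for a `0-1` matrix `A` with
all row sums `r i ≥ 1`, `perm A = ∏ i, (r i)! ^ (1 / r i)` iff, after suitable
permutations of the rows and of the columns, `A` is block diagonal with each
diagonal block a square all-ones matrix.  We express the latter by a colouring
`c` of the indices: the permuted matrix has a `1` in position `(i, j)` exactly
when `i` and `j` have the same colour (the blocks are then automatically
square). -/
theorem bregman_minc_equality_case {n : ℕ} (A : Matrix (Fin n) (Fin n) ℕ)
    (hA : ∀ i j, A i j = 0 ∨ A i j = 1) (hr : ∀ i, 1 ≤ ∑ j, A i j) :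
    (A.permanent : ℝ) =
        (∏ i : Fin n, ((∑ j, A i j).factorial : ℝ) ^ (1 / ((∑ j, A i j : ℕ) : ℝ)))
      ↔ ∃ (σ τ : Equiv.Perm (Fin n)) (c : Fin n → Fin n),
          ∀ i j, A (σ i) (τ j) = 1 ↔ c i = c j := by
  classical
  have hSset : Sset (Erel A) ∅ id
      = Finset.univ.filter (fun σ : Equiv.Perm (Fin n) => ∀ c, A (σ c) c = 1) := by
    ext σ
    simp only [mem_Sset, Finset.mem_filter, Finset.mem_univ, true_and]
    constructor
    · rintro ⟨-, h2⟩
      exact fun c => h2 c (Finset.notMem_empty c)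
    · intro h
      exact ⟨fun c hc => absurd hc (Finset.notMem_empty c), fun c _ => h c⟩
  have hperm : A.permanent = (Sset (Erel A) ∅ id).card := by
    rw [perm_eq_card A hA, hSset]
  have hrdeg : ∀ i, rdeg (Erel A) ∅ i = ∑ j, A i j := by
    intro i
    unfold rdeg
    rw [Finset.compl_empty, Finset.card_filter]
    apply Finset.sum_congr rfl
    intro j _
    rcases hA i j with h0 | h1
    · rw [h0, if_neg]
      intro hcon
      rw [Erel_iff, h0] at hcon
      exact absurd hcon (by norm_num)
    · rw [h1, if_pos ((Erel_iff A i j).2 h1)]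
  have hinj : Set.InjOn id ((∅ : Finset (Fin n)) : Set (Fin n)) := by
    intro x hx
    simp at hx
  have hmain := main (E := Erel A) ((∅ : Finset (Fin n))ᶜ.card) ∅ id rfl hinj
  have hfactpos : ∀ i : Fin n, (0:ℝ) < ((∑ j, A i j).factorial : ℝ) := fun i => by
    exact_mod_cast Nat.factorial_pos _
  have hBsum : Bsum (Erel A) ∅ id
      = ∑ i : Fin n, (1 / ((∑ j, A i j : ℕ) : ℝ)) * Real.log ((∑ j, A i j).factorial) := by
    unfold Bsum
    rw [Finset.image_empty, Finset.compl_empty]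
    exact Finset.sum_congr rfl fun b _ => by rw [hrdeg]
  have hprod_exp : (∏ i : Fin n, ((∑ j, A i j).factorial : ℝ) ^ (1 / ((∑ j, A i j : ℕ) : ℝ)))
      = Real.exp (Bsum (Erel A) ∅ id) := by
    rw [hBsum, Real.exp_sum]
    apply Finset.prod_congr rfl
    intro i _
    rw [Real.rpow_def_of_pos (hfactpos i), mul_comm]
  constructor
  · -- equality implies structure
    intro h
    rw [hprod_exp, hperm] at h
    have hcard1 : 1 ≤ (Sset (Erel A) ∅ id).card := by
      have h1 : (1:ℝ) ≤ ((Sset (Erel A) ∅ id).card : ℝ) := by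
        rw [h]
        exact Real.one_le_exp (Bsum_nonneg _ _)
      exact_mod_cast h1
    have hlog : Real.log ((Sset (Erel A) ∅ id).card) = Bsum (Erel A) ∅ id := by
      rw [h, Real.log_exp]
    have hblock := hmain.2 hcard1 hlog
    obtain ⟨π, hπ⟩ : (Sset (Erel A) ∅ id).Nonempty := Finset.card_pos.1 hcard1
    have hπE : ∀ c, Erel A (π c) c := fun c => (mem_Sset.1 hπ).2 c (Finset.notMem_empty c)
    have hN : ∀ x y j, Erel A x j → Erel A y j → ∀ j', (Erel A x j' ↔ Erel A y j') := by
      intro x y j hx hy j'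
      have hmem : ∀ z : Fin n, z ∈ (((∅ : Finset (Fin n))).image id)ᶜ := by simp
      have hmem' : ∀ z : Fin n, z ∈ ((∅ : Finset (Fin n)))ᶜ := by simp
      exact ⟨fun h' => hblock x (hmem x) y (hmem y) j (hmem' j) j' (hmem' j') hx hy h',
             fun h' => hblock y (hmem y) x (hmem x) j (hmem' j) j' (hmem' j') hy hx h'⟩
    have hne : ∀ i : Fin n, (Finset.univ.filter (fun j => Erel A (π i) j)).Nonempty :=
      fun i => ⟨i, Finset.mem_filter.2 ⟨Finset.mem_univ i, hπE i⟩⟩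
    refine ⟨π, 1, fun i => (Finset.univ.filter (fun j => Erel A (π i) j)).min' (hne i), ?_⟩
    intro i j
    simp only [Equiv.Perm.coe_one, id_eq]
    constructor
    · intro hAij
      have hEij : Erel A (π i) j := (Erel_iff A _ _).2 hAij
      have hfe : Finset.univ.filter (fun j' => Erel A (π i) j')
          = Finset.univ.filter (fun j' => Erel A (π j) j') := by
        apply Finset.filter_congr
        intro j' _
        exact hN (π i) (π j) j hEij (hπE j) j'
      exact min'_congr hfe (hne i) (hne j)
    · intro hc
      have h1 : Erel A (π i) ((Finset.univ.filter (fun j' => Erel A (π i) j')).min' (hne i)) :=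
        (Finset.mem_filter.1 (Finset.min'_mem _ (hne i))).2
      have h2 : Erel A (π j) ((Finset.univ.filter (fun j' => Erel A (π j) j')).min' (hne j)) :=
        (Finset.mem_filter.1 (Finset.min'_mem _ (hne j))).2
      rw [← hc] at h2
      exact (hN (π i) (π j) _ h1 h2 j).2 (hπE j)
  · -- structure implies equality
    rintro ⟨σ, τ, c, h⟩
    have hrowsum : ∀ i, (∑ j, A (σ i) j) = (Finset.univ.filter (fun x => c x = c i)).card := by
      intro i
      rw [← Equiv.sum_comp τ (fun j => A (σ i) j), Finset.card_filter]
      apply Finset.sum_congr rfl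
      intro j _
      rcases hA (σ i) (τ j) with h0 | h1
      · rw [h0, if_neg]
        intro hcc
        have := (h i j).2 hcc.symm
        rw [h0] at this
        exact absurd this (by norm_num)
      · rw [h1, if_pos ((h i j).1 h1).symm]
    have hpermB : A.permanent
        = ∏ v : Fin n, (Finset.univ.filter (fun x => c x = v)).card.factorial := by
      have hsub : A.submatrix σ τ = (A.submatrix σ id).submatrix id τ := by
        rw [Matrix.submatrix_submatrix]
        rfl
      have h1 : A.permanent = (A.submatrix σ τ).permanent := by
        rw [hsub, Matrix.permanent_permute_rows, Matrix.permanent_permute_cols]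
      rw [h1, perm_eq_card (A.submatrix σ τ) (fun i j => hA _ _)]
      rw [← count_fiber_perms c]
      congr 1
      apply Finset.filter_congr
      intro σ' _
      simp only [Matrix.submatrix_apply]
      exact forall_congr' fun i => by rw [h]
    have hRHS : (∏ i : Fin n, ((∑ j, A i j).factorial : ℝ) ^ (1 / ((∑ j, A i j : ℕ) : ℝ)))
        = ∏ v : Fin n, ((Finset.univ.filter (fun x => c x = v)).card.factorial : ℝ) := by
      rw [← Equiv.prod_comp σ
        (fun i => ((∑ j, A i j).factorial : ℝ) ^ (1 / ((∑ j, A i j : ℕ) : ℝ)))]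
      have hc1 : ∀ i : Fin n, (((∑ j, A (σ i) j).factorial : ℝ) ^ (1 / ((∑ j, A (σ i) j : ℕ) : ℝ)))
          = (((Finset.univ.filter (fun x => c x = c i)).card.factorial : ℝ)
              ^ (1 / ((Finset.univ.filter (fun x => c x = c i)).card : ℝ))) := fun i => by
        rw [hrowsum i]
      rw [Finset.prod_congr rfl (fun i _ => hc1 i)]
      rw [← Finset.prod_fiberwise_of_maps_to (g := c) (t := Finset.univ)
        (fun x _ => Finset.mem_univ (c x))]
      apply Finset.prod_congr rfl
      intro v _
      have hc2 : ∀ x ∈ Finset.univ.filter (fun x => c x = v),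
          (((Finset.univ.filter (fun y => c y = c x)).card.factorial : ℝ)
              ^ (1 / ((Finset.univ.filter (fun y => c y = c x)).card : ℝ)))
          = (((Finset.univ.filter (fun y => c y = v)).card.factorial : ℝ)
              ^ (1 / ((Finset.univ.filter (fun y => c y = v)).card : ℝ))) := by
        intro x hx
        rw [(Finset.mem_filter.1 hx).2]
      rw [Finset.prod_congr rfl hc2, Finset.prod_const]
      set kv := (Finset.univ.filter (fun y => c y = v)).card with hkv
      rcases Nat.eq_zero_or_pos kv with hk0 | hkpos
      · rw [hk0]
        simp
      · have hkR : ((kv:ℕ):ℝ) ≠ 0 := by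
          have : (0:ℝ) < kv := by exact_mod_cast hkpos
          exact ne_of_gt this
        have hfp : (0:ℝ) ≤ ((kv.factorial : ℕ) : ℝ) := Nat.cast_nonneg _
        rw [← Real.rpow_natCast
          (((kv.factorial : ℕ):ℝ) ^ (1 / ((kv:ℕ):ℝ))) kv]
        rw [← Real.rpow_mul hfp]
        rw [one_div, inv_mul_cancel₀ hkR, Real.rpow_one]
    rw [hpermB, hRHS]
    push_cast
    rfl
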